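/- Perturbed scalar gradient flow: let Δ : ℝ≥0 → ℝ be continuous and bounded with ∫₀^t Δ(s)² ds → ∞, let ε : ℝ≥0 → ℝ satisfy |ε(t)| ≤ K e^{-k t} for some K, k > 0, and let x solve ẋ = -γ Δ(t)² x + γ Δ(t) ε(t) with γ > 0. Then x(t) → 0 as t → ∞. -/

import Mathlib

open Filter Real MeasureTheory intervalIntegral

theorem stmt_11 (Δ : ℝ → ℝ) (hΔ : Continuous Δ) (M : ℝ) (hbdd : ∀ t, |Δ t| ≤ M)
    (hex : Tendsto (fun t => ∫ s in (0:ℝ)..t, (Δ s)^2) atTop atTop)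
    (ε : ℝ → ℝ) (K k : ℝ) (hK : 0 < K) (hk : 0 < k)
    (hε : ∀ t ≥ (0:ℝ), |ε t| ≤ K * Real.exp (-k * t))
    (γ : ℝ) (hγ : 0 < γ) (x : ℝ → ℝ)
    (hx : ∀ t, HasDerivAt x (-γ * (Δ t)^2 * x t + γ * Δ t * ε t) t) :
    Tendsto x atTop (nhds 0) := by
  have hM : 0 ≤ M := (abs_nonneg _).trans (hbdd 0)
  have hΔ2 : Continuous fun s => (Δ s)^2 := hΔ.pow 2
  set F : ℝ → ℝ := fun t => ∫ s in (0:ℝ)..t, (Δ s)^2 with hFdef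
  have hFderiv : ∀ t, HasDerivAt F ((Δ t)^2) t := fun t =>
    (hΔ2.integral_hasStrictDerivAt 0 t).hasDerivAt
  have hFmono : ∀ ⦃a b : ℝ⦄, a ≤ b → F a ≤ F b := by
    intro a b hab
    have h1 : F b - F a = ∫ s in a..b, (Δ s)^2 :=
      integral_interval_sub_left (hΔ2.intervalIntegrable 0 b) (hΔ2.intervalIntegrable 0 a)
    have h2 : 0 ≤ ∫ s in a..b, (Δ s)^2 :=
      intervalIntegral.integral_nonneg hab (fun s _ => sq_nonneg _)
    linarith
  set y : ℝ → ℝ := fun t => Real.exp (γ * F t) * x t with hydef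
  have hy : ∀ t, HasDerivAt y (Real.exp (γ * F t) * (γ * Δ t * ε t)) t := by
    intro t
    have h1 : HasDerivAt (fun t => Real.exp (γ * F t)) (Real.exp (γ * F t) * (γ * (Δ t)^2)) t :=
      ((hFderiv t).const_mul γ).exp
    have : HasDerivAt (fun t => Real.exp (γ * F t) * x t) _ t := h1.mul (hx t)
    convert this using 1
    ring
  set g : ℝ → ℝ := fun t => Real.exp (γ * F t) * (γ * Δ t * ε t) with hgdef
  have hgmeas : Measurable g := by
    have : deriv y = g := funext fun t => (hy t).deriv
    rw [← this]; exact measurable_deriv y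
  -- pointwise bound for s ≥ 0
  have hgbound : ∀ s ≥ (0:ℝ), |g s| ≤ Real.exp (γ * F s) * (γ * M * K * Real.exp (-k * s)) := by
    intro s hs
    have h1 : |g s| = Real.exp (γ * F s) * (γ * (|Δ s| * |ε s|)) := by
      rw [hgdef]
      rw [abs_mul, abs_of_pos (Real.exp_pos _), abs_mul, abs_mul, abs_of_pos hγ]
      ring_nf
    rw [h1]
    have h2 : |Δ s| * |ε s| ≤ M * (K * Real.exp (-k * s)) :=
      mul_le_mul (hbdd s) (hε s hs) (abs_nonneg _) hM
    have h3 : γ * (|Δ s| * |ε s|) ≤ γ * (M * (K * Real.exp (-k * s))) := by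
      exact mul_le_mul_of_nonneg_left h2 hγ.le
    calc Real.exp (γ * F s) * (γ * (|Δ s| * |ε s|))
        ≤ Real.exp (γ * F s) * (γ * (M * (K * Real.exp (-k * s)))) :=
          mul_le_mul_of_nonneg_left h3 (Real.exp_pos _).le
      _ = Real.exp (γ * F s) * (γ * M * K * Real.exp (-k * s)) := by ring
  have hgint : ∀ a b : ℝ, 0 ≤ a → a ≤ b → IntervalIntegrable g volume a b := by
    intro a b ha hab
    apply IntervalIntegrable.mono_fun' (g := fun _ => Real.exp (γ * F b) * (γ * M * K))
      intervalIntegrable_const hgmeas.aestronglyMeasurable.restrict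
    rw [Filter.EventuallyLE, ae_restrict_iff' measurableSet_uIoc]
    refine Eventually.of_forall fun s hs => ?_
    rw [Set.uIoc_of_le hab] at hs
    have hs0 : (0:ℝ) ≤ s := ha.trans hs.1.le
    calc ‖g s‖ ≤ Real.exp (γ * F s) * (γ * M * K * Real.exp (-k * s)) := hgbound s hs0
      _ ≤ Real.exp (γ * F b) * (γ * M * K * 1) := by
          apply mul_le_mul (Real.exp_le_exp.2 (mul_le_mul_of_nonneg_left (hFmono hs.2) hγ.le))
          · apply mul_le_mul_of_nonneg_left _ (by positivity)
            exact Real.exp_le_one_iff.2 (by nlinarith)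
          · positivity
          · positivity
      _ = Real.exp (γ * F b) * (γ * M * K) := by ring
  have hkey : ∀ t ≥ (0:ℝ), x t = Real.exp (-(γ * F t)) * (y 0 + ∫ s in (0:ℝ)..t, g s) := by
    intro t ht
    have hftc : ∫ s in (0:ℝ)..t, g s = y t - y 0 :=
      integral_eq_sub_of_hasDerivAt (fun s _ => hy s) (hgint 0 t le_rfl ht)
    rw [hftc]
    rw [hydef]
    simp only
    rw [Real.exp_neg]
    field_simp
    ring
  -- the exponential factor tends to 0
  have hFtop : Tendsto F atTop atTop := hex
  have hexp0 : Tendsto (fun t => Real.exp (-(γ * F t))) atTop (nhds 0) := by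
    apply Real.tendsto_exp_atBot.comp
    exact (tendsto_neg_atBot_iff.2 (hFtop.const_mul_atTop hγ))
  rw [NormedAddCommGroup.tendsto_nhds_zero]
  intro η hη
  -- choose T
  have hTex : ∃ T : ℝ, 0 ≤ T ∧ γ * M * K / k * Real.exp (-k * T) < η / 2 := by
    have h1 : Tendsto (fun T => γ * M * K / k * Real.exp (-k * T)) atTop (nhds 0) := by
      have := Real.tendsto_exp_atBot.comp
        (tendsto_neg_atBot_iff.2 (tendsto_id.const_mul_atTop hk))
      simpa using this.const_mul (γ * M * K / k)
    have h2 := (h1.eventually (eventually_lt_nhds (by linarith : (0:ℝ) < η/2))).and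
      (eventually_ge_atTop (0:ℝ))
    obtain ⟨T, h3, h4⟩ := h2.exists
    exact ⟨T, h4, h3⟩
  obtain ⟨T, hT0, hTη⟩ := hTex
  set C : ℝ := |y 0| + ∫ s in (0:ℝ)..T, |g s| with hCdef
  -- main estimate for t ≥ T
  have hmain : ∀ t ≥ T, |x t| ≤ Real.exp (-(γ * F t)) * C + γ * M * K / k * Real.exp (-k * T) := by
    intro t ht
    have ht0 : (0:ℝ) ≤ t := hT0.trans ht
    rw [hkey t ht0]
    have hsplit : (∫ s in (0:ℝ)..t, g s) = (∫ s in (0:ℝ)..T, g s) + ∫ s in T..t, g s :=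
      (integral_add_adjacent_intervals (hgint 0 T le_rfl hT0) (hgint T t hT0 ht)).symm
    rw [hsplit]
    rw [abs_mul, abs_of_pos (Real.exp_pos _)]
    have h1 : |y 0 + ((∫ s in (0:ℝ)..T, g s) + ∫ s in T..t, g s)| ≤ C + ∫ s in T..t, |g s| := by
      rw [hCdef]
      calc |y 0 + ((∫ s in (0:ℝ)..T, g s) + ∫ s in T..t, g s)|
            ≤ |y 0| + |(∫ s in (0:ℝ)..T, g s) + ∫ s in T..t, g s| := abs_add_le _ _
          _ ≤ |y 0| + (|∫ s in (0:ℝ)..T, g s| + |∫ s in T..t, g s|) := by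
              gcongr; exact abs_add_le _ _
          _ ≤ |y 0| + ((∫ s in (0:ℝ)..T, |g s|) + ∫ s in T..t, |g s|) := by
              gcongr
              · exact intervalIntegral.abs_integral_le_integral_abs (μ := volume) (f := g) hT0
              · exact intervalIntegral.abs_integral_le_integral_abs (μ := volume) (f := g) ht
          _ = |y 0| + (∫ s in (0:ℝ)..T, |g s|) + ∫ s in T..t, |g s| := by ring
    have h2 : Real.exp (-(γ * F t)) * (∫ s in T..t, |g s|) ≤ γ * M * K / k * Real.exp (-k * T) := by
      have hbd : ∀ s ∈ Set.Icc T t, Real.exp (-(γ * F t)) * |g s| ≤ γ * M * K * Real.exp (-k * s) := by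
        intro s hs
        have hs0 : (0:ℝ) ≤ s := hT0.trans hs.1
        calc Real.exp (-(γ * F t)) * |g s|
            ≤ Real.exp (-(γ * F t)) * (Real.exp (γ * F s) * (γ * M * K * Real.exp (-k * s))) :=
              mul_le_mul_of_nonneg_left (hgbound s hs0) (Real.exp_pos _).le
          _ = Real.exp (γ * F s - γ * F t) * (γ * M * K * Real.exp (-k * s)) := by
              rw [Real.exp_sub, Real.exp_neg]; ring
          _ ≤ 1 * (γ * M * K * Real.exp (-k * s)) := by
              apply mul_le_mul_of_nonneg_right _ (by positivity)
              exact Real.exp_le_one_iff.2 (by nlinarith [hFmono hs.2])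
          _ = γ * M * K * Real.exp (-k * s) := one_mul _
      have hint1 : IntervalIntegrable (fun s => Real.exp (-(γ * F t)) * |g s|) volume T t :=
        ((hgint T t hT0 ht).abs).const_mul _
      have hc : Continuous fun s => γ * M * K * Real.exp (-k * s) :=
        continuous_const.mul (Real.continuous_exp.comp (continuous_const.mul continuous_id))
      have hint2 : IntervalIntegrable (fun s => γ * M * K * Real.exp (-k * s)) volume T t :=
        hc.intervalIntegrable T t
      have h3 := intervalIntegral.integral_mono_on ht hint1 hint2 hbd
      rw [intervalIntegral.integral_const_mul] at h3
      have h4 : (∫ s in T..t, γ * M * K * Real.exp (-k * s))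
          = γ * M * K / k * Real.exp (-k * T) - γ * M * K / k * Real.exp (-k * t) := by
        have hasd : ∀ s ∈ Set.uIcc T t, HasDerivAt (fun s => -(γ * M * K / k) * Real.exp (-k * s))
            (γ * M * K * Real.exp (-k * s)) s := by
          intro s _
          have hlin : HasDerivAt (fun s : ℝ => -k * s) (-k * 1) s := (hasDerivAt_id s).const_mul (-k)
          have h5 := hlin.exp
          have h6 : HasDerivAt (fun s => -(γ * M * K / k) * Real.exp (-k * s)) _ s := h5.const_mul (-(γ * M * K / k))
          convert h6 using 1
          field_simp
        rw [integral_eq_sub_of_hasDerivAt hasd hint2]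
        ring
      rw [h4] at h3
      have h6 : 0 ≤ γ * M * K / k * Real.exp (-k * t) := by positivity
      linarith
    calc Real.exp (-(γ * F t)) * |y 0 + ((∫ s in (0:ℝ)..T, g s) + ∫ s in T..t, g s)|
        ≤ Real.exp (-(γ * F t)) * (C + ∫ s in T..t, |g s|) :=
          mul_le_mul_of_nonneg_left h1 (Real.exp_pos _).le
      _ = Real.exp (-(γ * F t)) * C + Real.exp (-(γ * F t)) * ∫ s in T..t, |g s| := by ring
      _ ≤ Real.exp (-(γ * F t)) * C + γ * M * K / k * Real.exp (-k * T) := by linarith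
  -- conclude
  have hC0 : 0 ≤ C := by
    rw [hCdef]
    have : 0 ≤ ∫ s in (0:ℝ)..T, |g s| :=
      intervalIntegral.integral_nonneg hT0 (fun s _ => abs_nonneg _)
    positivity
  have hev1 : ∀ᶠ t in atTop, Real.exp (-(γ * F t)) * C < η / 2 :=
    (hexp0.mul_const C).eventually (by simpa using eventually_lt_nhds (by linarith : (0:ℝ) < η/2))
  filter_upwards [hev1, eventually_ge_atTop T] with t h1 h2
  have h3 := hmain t h2
  rw [Real.norm_eq_abs]
  linarith
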